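/- The category of mixed Hodge structures over a subfield k ⊆ ℝ is abelian; in particular every morphism of mixed Hodge structures is strict with respect to the weight filtration: if f : V → V' is a morphism of mixed Hodge structures, then f(V) ∩ W_m V' = f(W_m V) for all m. -/

import Mathlib

/-- The `m`-th graded piece `Gr^W_m V = W_m / W_{m-1}` of a filtered vector space. -/
abbrev grW {V : Type} [AddCommGroup V] [Module ℂ V] (W : ℤ → Submodule ℂ V) (m : ℤ) :=
  ↥(W m) ⧸ (Submodule.comap (W m).subtype (W (m - 1)))

/-- The filtration induced by a filtration `S` on the graded piece `Gr^W_m V`. -/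
noncomputable def grFil {V : Type} [AddCommGroup V] [Module ℂ V]
    (W S : ℤ → Submodule ℂ V) (m p : ℤ) : Submodule ℂ (grW W m) :=
  Submodule.map (Submodule.comap (W m).subtype (W (m - 1))).mkQ
    (Submodule.comap (W m).subtype (S p))

/-- A mixed Hodge structure, encoded on the complexification: a finite-dimensional
complex vector space `V` with a finite exhaustive increasing weight filtration `W`,
a finite decreasing Hodge filtration `F` and its conjugate filtration `G = F̄`,
such that for each `m` the filtrations induced by `F` and `G` on `Gr^W_m V` define
a pure Hodge structure of weight `m`, i.e. a bigrading
`Gr^W_m V = ⊕_{p+q=m} F^p ∩ G^q`. -/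
structure IsMHS {V : Type} [AddCommGroup V] [Module ℂ V]
    (W F G : ℤ → Submodule ℂ V) : Prop where
  fin : FiniteDimensional ℂ V
  monoW : Monotone W
  antiF : Antitone F
  antiG : Antitone G
  w_bot : ∃ a : ℤ, W a = ⊥
  w_top : ∃ b : ℤ, W b = ⊤
  f_top : ∃ a : ℤ, F a = ⊤
  f_bot : ∃ b : ℤ, F b = ⊥
  g_top : ∃ a : ℤ, G a = ⊤
  g_bot : ∃ b : ℤ, G b = ⊥
  pure : ∀ m : ℤ, DirectSum.IsInternal
    (fun p : ℤ => grFil W F m p ⊓ grFil W G m (m - p))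

/-- Deligne's subspace
`I^{p,q} = (F^p ∩ W_{p+q}) ∩ ((F̄^q ∩ W_{p+q}) + Σ_{i>0} (F̄^{q-i} ∩ W_{p+q-1-i}))`. -/
noncomputable def deligneI {V : Type} [AddCommGroup V] [Module ℂ V]
    (W F G : ℤ → Submodule ℂ V) (p q : ℤ) : Submodule ℂ V :=
  (F p ⊓ W (p + q)) ⊓
    ((G q ⊓ W (p + q)) ⊔
      ⨆ i : ℕ, (G (q - ((i : ℤ) + 1)) ⊓ W (p + q - 2 - (i : ℤ))))

namespace MHSAux

open Submodule

variable {V : Type} [AddCommGroup V] [Module ℂ V]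

/-- The second factor of Deligne's subspace. -/
noncomputable def Jf (W G : ℤ → Submodule ℂ V) (q m : ℤ) : Submodule ℂ V :=
  (G q ⊓ W m) ⊔ ⨆ i : ℕ, (G (q - ((i : ℤ) + 1)) ⊓ W (m - 2 - (i : ℤ)))

lemma deligneI_eq (W F G : ℤ → Submodule ℂ V) (p q : ℤ) :
    deligneI W F G p q = (F p ⊓ W (p + q)) ⊓ Jf W G q (p + q) := rfl

/-- Projection onto the `n`-th graded piece. -/
noncomputable def pim (W : ℤ → Submodule ℂ V) (n : ℤ) : ↥(W n) →ₗ[ℂ] grW W n :=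
  (Submodule.comap (W n).subtype (W (n - 1))).mkQ

lemma grFil_eq (W S : ℤ → Submodule ℂ V) (n p : ℤ) :
    grFil W S n p = Submodule.map (pim W n) (Submodule.comap (W n).subtype (S p)) := rfl

lemma pim_mem_grFil {W : ℤ → Submodule ℂ V} (S : ℤ → Submodule ℂ V) {n p : ℤ}
    (x : ↥(W n)) (hx : (x : V) ∈ S p) : pim W n x ∈ grFil W S n p := by
  rw [grFil_eq]
  exact Submodule.mem_map_of_mem (by simpa using hx)

lemma pim_eq_zero_iff {W : ℤ → Submodule ℂ V} {n : ℤ} (x : ↥(W n)) :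
    pim W n x = 0 ↔ (x : V) ∈ W (n - 1) := by
  rw [pim, Submodule.mkQ_apply, Submodule.Quotient.mk_eq_zero, Submodule.mem_comap,
    Submodule.subtype_apply]

lemma grFil_anti {W S : ℤ → Submodule ℂ V} (hS : Antitone S) (n : ℤ) {p p' : ℤ} (hp : p ≤ p') :
    grFil W S n p' ≤ grFil W S n p :=
  Submodule.map_mono (Submodule.comap_mono (hS hp))

lemma deligneI_le_F (W F G : ℤ → Submodule ℂ V) (p q : ℤ) :
    deligneI W F G p q ≤ F p := inf_le_left.trans inf_le_left

lemma deligneI_le_W (W F G : ℤ → Submodule ℂ V) (p q : ℤ) :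
    deligneI W F G p q ≤ W (p + q) := inf_le_left.trans inf_le_right

lemma deligneI_le_J (W F G : ℤ → Submodule ℂ V) (p q : ℤ) :
    deligneI W F G p q ≤ Jf W G q (p + q) := inf_le_right

/-- If two graded pieces of complementary-beyond-`n` indices meet, they are zero. -/
lemma opposed {W F G : ℤ → Submodule ℂ V} (h : IsMHS W F G) {n p q : ℤ} (hpq : n < p + q) :
    grFil W F n p ⊓ grFil W G n q = ⊥ := by
  have hind := (h.pure n).submodule_iSupIndep
  set p0 := n + 1 - q with hp0
  have h1 : grFil W F n p ⊓ grFil W G n q ≤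
      (grFil W F n p0 ⊓ grFil W G n (n - p0)) ⊓
      (grFil W F n (p0 - 1) ⊓ grFil W G n (n - (p0 - 1))) := by
    have e : n - (p0 - 1) = q := by omega
    refine le_inf (inf_le_inf (grFil_anti h.antiF n (by omega))
      ((grFil_anti h.antiG n (by omega)))) (inf_le_inf (grFil_anti h.antiF n (by omega)) ?_)
    rw [e]
  have h2 : (grFil W F n p0 ⊓ grFil W G n (n - p0)) ⊓
      (grFil W F n (p0 - 1) ⊓ grFil W G n (n - (p0 - 1))) = ⊥ := by
    have hd := hind p0
    have hle : (grFil W F n (p0 - 1) ⊓ grFil W G n (n - (p0 - 1))) ≤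
        ⨆ (j : ℤ) (_ : j ≠ p0), (grFil W F n j ⊓ grFil W G n (n - j)) :=
      le_iSup_of_le (p0 - 1) (le_iSup_of_le (by omega) le_rfl)
    exact le_bot_iff.mp (le_trans (inf_le_inf_left _ hle) (disjoint_iff.mp hd).le)
  exact le_bot_iff.mp (h1.trans h2.le)

lemma Jf_le_shift {W G : ℤ → Submodule ℂ V} (hW : Monotone W) (hG : Antitone G)
    (q m : ℤ) (k : ℕ) :
    Jf W G q m ≤ (G (q - k) ⊓ W m) ⊔ W (m - 2 - k) := by
  apply sup_le
  · exact le_sup_of_le_left (inf_le_inf (hG (by omega)) le_rfl)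
  · apply iSup_le; intro i
    rcases lt_or_ge i k with hik | hik
    · refine le_sup_of_le_left (inf_le_inf (hG ?_) (hW ?_)) <;> omega
    · exact le_sup_of_le_right (le_trans inf_le_right (hW (by omega)))

lemma pim_mem_of_decomp {W : ℤ → Submodule ℂ V} (S : ℤ → Submodule ℂ V) (hW : Monotone W)
    {n t : ℤ} {x u w : V}
    (hxn : x ∈ W n) (hu : u ∈ S t) (hw : w ∈ W (n - 1)) (huw : u + w = x) :
    pim W n ⟨x, hxn⟩ ∈ grFil W S n t := by
  have hwn : w ∈ W n := hW (by omega) hw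
  have hun : u ∈ W n := by
    have : u = x - w := by rw [← huw]; abel
    rw [this]; exact sub_mem hxn hwn
  have hxe : (⟨x, hxn⟩ : ↥(W n)) = ⟨u, hun⟩ + ⟨w, hwn⟩ := by
    apply Subtype.ext; simp [huw]
  rw [hxe, map_add, (pim_eq_zero_iff (⟨w, hwn⟩ : ↥(W n))).mpr hw, add_zero]
  exact pim_mem_grFil S _ hu

/-- Key injectivity: an element of `I^{p,q}` lying in `W_{p+q-1}` is zero. -/
lemma deligneI_inf_W {W F G : ℤ → Submodule ℂ V} (h : IsMHS W F G) (p q : ℤ) {x : V}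
    (hxI : x ∈ deligneI W F G p q) (hxW : x ∈ W (p + q - 1)) : x = 0 := by
  set m := p + q with hm
  have hxF : x ∈ F p := deligneI_le_F W F G p q hxI
  have hxJ : x ∈ Jf W G q m := deligneI_le_J W F G p q hxI
  have key : ∀ k : ℕ, x ∈ W (m - 1 - k) := by
    intro k; induction k with
    | zero => simpa using hxW
    | succ k ih =>
      set n := m - 1 - (k : ℤ) with hn
      have hxk := Jf_le_shift h.monoW h.antiG q m k hxJ
      rw [Submodule.mem_sup] at hxk
      obtain ⟨u, hu, w, hw, huw⟩ := hxk
      have hwn : w ∈ W (n - 1) := by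
        have e : (m - 2 - (k : ℤ)) = n - 1 := by omega
        rwa [e] at hw
      have hclassG : pim W n ⟨x, ih⟩ ∈ grFil W G n (q - k) :=
        pim_mem_of_decomp G h.monoW ih hu.1 hwn huw
      have hclassF : pim W n ⟨x, ih⟩ ∈ grFil W F n p := pim_mem_grFil F _ hxF
      have hzero : pim W n ⟨x, ih⟩ = 0 := by
        have := opposed h (n := n) (p := p) (q := q - k) (by omega)
        have hmem : pim W n ⟨x, ih⟩ ∈ grFil W F n p ⊓ grFil W G n (q - k) :=
          ⟨hclassF, hclassG⟩
        rw [this] at hmem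
        simpa using hmem
      have := (pim_eq_zero_iff _).mp hzero
      have e : n - 1 = m - 1 - ((k : ℤ) + 1) := by omega
      rw [e] at this
      simpa [Nat.cast_add] using this
  obtain ⟨a, ha⟩ := h.w_bot
  have hk : m - 1 - ((m - 1 - a).toNat : ℤ) ≤ a := by omega
  have := h.monoW hk (key (m - 1 - a).toNat)
  rw [ha] at this
  simpa using this

end MHSAux

namespace MHSAux

open Submodule

variable {V : Type} [AddCommGroup V] [Module ℂ V]

/-- Independence at the top weight level: summands in `I^{p,q}` with `p+q = M`
whose sum lies in `W_{M-1}` all vanish. -/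
lemma top_level_zero {W F G : ℤ → Submodule ℂ V} (h : IsMHS W F G) (M : ℤ)
    (s : Finset (ℤ × ℤ)) (y : ℤ × ℤ → V)
    (hyI : ∀ pq ∈ s, y pq ∈ deligneI W F G pq.1 pq.2)
    (hlev : ∀ pq ∈ s, pq.1 + pq.2 = M)
    (hsum : (∑ pq ∈ s, y pq) ∈ W (M - 1)) :
    ∀ pq ∈ s, y pq = 0 := by
  classical
  have hWM : ∀ pq ∈ s, y pq ∈ W M := by
    intro pq hpq
    have := deligneI_le_W W F G pq.1 pq.2 (hyI pq hpq)
    rwa [hlev pq hpq] at this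
  set Y : {x // x ∈ s} → ↥(W M) := fun pq => ⟨y pq.1, hWM pq.1 pq.2⟩ with hY
  have hsumY : ((∑ pq ∈ s.attach, Y pq : ↥(W M)) : V) = ∑ pq ∈ s, y pq := by
    rw [AddSubmonoidClass.coe_finset_sum]
    exact Finset.sum_attach s y
  have hA : ∀ pq : {x // x ∈ s},
      pim W M (Y pq) ∈ grFil W F M pq.1.1 ⊓ grFil W G M (M - pq.1.1) := by
    intro pq
    constructor
    · exact pim_mem_grFil F _ (deligneI_le_F W F G pq.1.1 pq.1.2 (hyI pq.1 pq.2))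
    · have hJ : y pq.1 ∈ Jf W G pq.1.2 M := by
        have := deligneI_le_J W F G pq.1.1 pq.1.2 (hyI pq.1 pq.2)
        rwa [hlev pq.1 pq.2] at this
      have hsh := Jf_le_shift h.monoW h.antiG pq.1.2 M 0 hJ
      rw [Submodule.mem_sup] at hsh
      obtain ⟨u, hu, w, hw, huw⟩ := hsh
      have hu2 : u ∈ G (M - pq.1.1) := by
        have e : M - pq.1.1 = pq.1.2 - (0 : ℕ) := by
          have := hlev pq.1 pq.2; push_cast; omega
        rw [e]; exact hu.1
      have hw2 : w ∈ W (M - 1) := h.monoW (by push_cast; omega) hw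
      exact pim_mem_of_decomp G h.monoW _ hu2 hw2 huw
  have hsum0 : (∑ pq ∈ s.attach, pim W M (Y pq)) = 0 := by
    rw [← map_sum, pim_eq_zero_iff]
    rw [hsumY]; exact hsum
  intro pq0 hpq0
  set i0 : {x // x ∈ s} := ⟨pq0, hpq0⟩ with hi0
  have hξ0 : pim W M (Y i0) = - ∑ pq ∈ s.attach.erase i0, pim W M (Y pq) := by
    have := Finset.add_sum_erase s.attach (fun pq => pim W M (Y pq)) (Finset.mem_attach s i0)
    rw [hsum0] at this
    linear_combination (norm := abel) this
  have hmem2 : pim W M (Y i0) ∈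
      ⨆ (j : ℤ) (_ : j ≠ pq0.1), (grFil W F M j ⊓ grFil W G M (M - j)) := by
    rw [hξ0]
    apply neg_mem
    apply sum_mem
    intro pq hpq
    have hne : pq.1.1 ≠ pq0.1 := by
      intro he
      have h1 := hlev pq.1 pq.2
      have h2 := hlev pq0 hpq0
      have : pq.1 = pq0 := Prod.ext he (by omega)
      exact (Finset.mem_erase.mp hpq).1 (Subtype.ext this)
    exact Submodule.mem_iSup_of_mem pq.1.1 (Submodule.mem_iSup_of_mem hne (hA pq))
  have hdisj := (h.pure M).submodule_iSupIndep pq0.1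
  have hz : pim W M (Y i0) = 0 :=
    Submodule.disjoint_def.mp hdisj _ (hA i0) hmem2
  have hWprev : y pq0 ∈ W (M - 1) := (pim_eq_zero_iff _).mp hz
  refine deligneI_inf_W h pq0.1 pq0.2 (hyI pq0 hpq0) ?_
  rwa [hlev pq0 hpq0]

/-- Sums of elements of `I^{p,q}` with `p+q > m` lying in `W_m` vanish. -/
lemma sum_gt_eq_zero {W F G : ℤ → Submodule ℂ V} (h : IsMHS W F G) (m : ℤ)
    (s : Finset (ℤ × ℤ)) (y : ℤ × ℤ → V)
    (hyI : ∀ pq ∈ s, y pq ∈ deligneI W F G pq.1 pq.2)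
    (hlev : ∀ pq ∈ s, m < pq.1 + pq.2)
    (hsum : (∑ pq ∈ s, y pq) ∈ W m) :
    (∑ pq ∈ s, y pq) = 0 := by
  classical
  have main : ∀ n : ℕ, ∀ s : Finset (ℤ × ℤ), ∀ y : ℤ × ℤ → V,
      (∀ pq ∈ s, y pq ∈ deligneI W F G pq.1 pq.2) →
      (∀ pq ∈ s, m < pq.1 + pq.2 ∧ pq.1 + pq.2 ≤ m + n) →
      (∑ pq ∈ s, y pq) ∈ W m → (∑ pq ∈ s, y pq) = 0 := by
    intro n
    induction n with
    | zero =>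
      intro s y hI hl _
      exact Finset.sum_eq_zero fun pq hpq => absurd (hl pq hpq) (by omega)
    | succ n ih =>
      intro s y hI hl hs
      set N : ℤ := m + (n : ℤ) + 1 with hN
      set s1 := s.filter (fun pq => pq.1 + pq.2 = N) with hs1
      set s2 := s.filter (fun pq => ¬ pq.1 + pq.2 = N) with hs2
      have hsplit : ∑ pq ∈ s1, y pq + ∑ pq ∈ s2, y pq = ∑ pq ∈ s, y pq :=
        Finset.sum_filter_add_sum_filter_not s _ y
      have hs2W : (∑ pq ∈ s2, y pq) ∈ W (N - 1) := by
        apply sum_mem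
        intro pq hpq
        obtain ⟨hmem, hne⟩ := Finset.mem_filter.mp hpq
        have := hl pq hmem
        exact h.monoW (by omega) (deligneI_le_W W F G pq.1 pq.2 (hI pq hmem))
      have hs1W : (∑ pq ∈ s1, y pq) ∈ W (N - 1) := by
        have h1 : (∑ pq ∈ s, y pq) ∈ W (N - 1) := h.monoW (by omega) hs
        have : (∑ pq ∈ s1, y pq) = (∑ pq ∈ s, y pq) - ∑ pq ∈ s2, y pq := by
          rw [← hsplit]; abel
        rw [this]; exact sub_mem h1 hs2W
      have h1zero : ∀ pq ∈ s1, y pq = 0 := by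
        refine top_level_zero h N s1 y (fun pq hpq => hI pq (Finset.mem_filter.mp hpq).1)
          (fun pq hpq => (Finset.mem_filter.mp hpq).2) hs1W
      have hsum1 : ∑ pq ∈ s1, y pq = 0 := Finset.sum_eq_zero h1zero
      have hse : ∑ pq ∈ s, y pq = ∑ pq ∈ s2, y pq := by rw [← hsplit, hsum1, zero_add]
      rw [hse]
      refine ih s2 y (fun pq hpq => hI pq (Finset.mem_filter.mp hpq).1) ?_ (by rwa [← hse])
      intro pq hpq
      obtain ⟨hmem, hne⟩ := Finset.mem_filter.mp hpq
      exact ⟨(hl pq hmem).1, by have := (hl pq hmem).2; omega⟩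
  set n : ℕ := (s.sup fun pq => (pq.1 + pq.2 - m).toNat) with hn
  refine main n s y hyI (fun pq hpq => ⟨hlev pq hpq, ?_⟩) hsum
  have h2 : (pq.1 + pq.2 - m).toNat ≤ n := by
    simpa using Finset.le_sup (f := fun pq : ℤ × ℤ => (pq.1 + pq.2 - m).toNat) hpq
  omega

end MHSAux

namespace MHSAux

open Submodule

variable {V : Type} [AddCommGroup V] [Module ℂ V]

/-- The sum of the Deligne subspaces of total weight at most `m`. -/
noncomputable def Tm (W F G : ℤ → Submodule ℂ V) (m : ℤ) : Submodule ℂ V :=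
  ⨆ (pq : ℤ × ℤ) (_ : pq.1 + pq.2 ≤ m), deligneI W F G pq.1 pq.2

lemma Tm_mono (W F G : ℤ → Submodule ℂ V) {m m' : ℤ} (hm : m ≤ m') :
    Tm W F G m ≤ Tm W F G m' :=
  iSup₂_le fun pq hpq => le_iSup_of_le pq (le_iSup_of_le (le_trans hpq hm) le_rfl)

lemma Jf_le_Jf {W G : ℤ → Submodule ℂ V} (hW : Monotone W) (hG : Antitone G)
    {s n q m : ℤ} (h1 : n ≤ m - 1) (h2 : n - s ≤ m - 1 - q) :
    Jf W G s n ≤ Jf W G q m := by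
  apply sup_le
  · rcases le_or_gt q s with hqs | hqs
    · exact le_sup_of_le_left (inf_le_inf (hG hqs) (hW (by omega)))
    · refine le_sup_of_le_right (le_iSup_of_le (q - 1 - s).toNat ?_)
      have e1 : q - (((q - 1 - s).toNat : ℤ) + 1) = s := by omega
      rw [e1]
      exact inf_le_inf le_rfl (hW (by omega))
  · apply iSup_le; intro j
    rcases le_or_gt q (s - (j + 1)) with hqs | hqs
    · exact le_sup_of_le_left (inf_le_inf (hG hqs) (hW (by omega)))
    · refine le_sup_of_le_right (le_iSup_of_le (q - s + j).toNat ?_)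
      have e1 : q - (((q - s + j).toNat : ℤ) + 1) = s - ((j : ℤ) + 1) := by omega
      rw [e1]
      exact inf_le_inf le_rfl (hW (by omega))

lemma deligneI_le_Jf {W F G : ℤ → Submodule ℂ V} (hW : Monotone W) (hG : Antitone G)
    {r s q m : ℤ} (h1 : r + s ≤ m - 1) (h2 : r ≤ m - 1 - q) :
    deligneI W F G r s ≤ Jf W G q m :=
  (deligneI_le_J W F G r s).trans (Jf_le_Jf hW hG h1 (by omega))

/-- Surjectivity: assuming the decomposition below weight `m`, each graded piece
`grF^p ⊓ grG^{m-p}` of `Gr^W_m` is the image of `I^{p,m-p}`. -/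
lemma grb_le_image {W F G : ℤ → Submodule ℂ V} (h : IsMHS W F G) {m : ℤ}
    (IH : W (m - 1) ≤ Tm W F G (m - 1)) (p : ℤ) :
    grFil W F m p ⊓ grFil W G m (m - p) ≤
      Submodule.map (pim W m) (Submodule.comap (W m).subtype (deligneI W F G p (m - p))) := by
  rintro ξ ⟨hξF, hξG⟩
  rw [grFil_eq] at hξF hξG
  obtain ⟨u, hu, rfl⟩ := hξF
  obtain ⟨v, hv, hvu⟩ := hξG
  simp only [SetLike.mem_coe, Submodule.mem_comap, Submodule.subtype_apply] at hu hv
  have hwW : ((u : V) - v) ∈ W (m - 1) := by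
    have : pim W m (u - v) = 0 := by rw [map_sub, hvu, sub_self]
    simpa using (pim_eq_zero_iff (u - v)).mp this
  -- split W_{m-1} into the parts with first index ≥ p and < p
  set A : Submodule ℂ V :=
    ⨆ (pq : ℤ × ℤ) (_ : pq.1 + pq.2 ≤ m - 1 ∧ p ≤ pq.1), deligneI W F G pq.1 pq.2 with hA
  set B : Submodule ℂ V :=
    ⨆ (pq : ℤ × ℤ) (_ : pq.1 + pq.2 ≤ m - 1 ∧ pq.1 < p), deligneI W F G pq.1 pq.2 with hB
  have hTAB : Tm W F G (m - 1) ≤ A ⊔ B := by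
    refine iSup₂_le fun pq hpq => ?_
    rcases le_or_gt p pq.1 with hp | hp
    · exact le_sup_of_le_left (le_iSup_of_le pq (le_iSup_of_le ⟨hpq, hp⟩ le_rfl))
    · exact le_sup_of_le_right (le_iSup_of_le pq (le_iSup_of_le ⟨hpq, hp⟩ le_rfl))
  have hAle : A ≤ F p ⊓ W (m - 1) := by
    refine iSup₂_le fun pq hpq => le_inf ?_ ?_
    · exact (deligneI_le_F W F G pq.1 pq.2).trans (h.antiF hpq.2)
    · exact (deligneI_le_W W F G pq.1 pq.2).trans (h.monoW hpq.1)
  have hBle : B ≤ Jf W G (m - p) m :=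
    iSup₂_le fun pq hpq => deligneI_le_Jf h.monoW h.antiG hpq.1 (by omega)
  have hw2 : ((u : V) - v) ∈ A ⊔ B := hTAB (IH hwW)
  rw [Submodule.mem_sup] at hw2
  obtain ⟨a, ha, b, hb, hab⟩ := hw2
  have haF : a ∈ F p := (hAle ha).1
  have haW1 : a ∈ W (m - 1) := (hAle ha).2
  have haW : a ∈ W m := h.monoW (by omega) haW1
  have hu' : ((u : V) - a) ∈ deligneI W F G p (m - p) := by
    rw [deligneI_eq]
    have e : p + (m - p) = m := by ring
    rw [e]
    refine ⟨⟨sub_mem hu haF, sub_mem u.2 haW⟩, ?_⟩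
    have : (u : V) - a = v + b := by
      have : a + b = (u : V) - v := hab
      linear_combination (norm := abel) - this
    rw [this]
    exact add_mem (le_sup_left (a := G (m - p) ⊓ W m) ⟨hv, v.2⟩) (hBle hb)
  refine ⟨⟨(u : V) - a, sub_mem u.2 haW⟩, by simpa using hu', ?_⟩
  have he : (⟨(u : V) - a, sub_mem u.2 haW⟩ : ↥(W m)) = u - ⟨a, haW⟩ := rfl
  rw [he, map_sub, (pim_eq_zero_iff (⟨a, haW⟩ : ↥(W m))).mpr haW1, sub_zero]

lemma step_Tm {W F G : ℤ → Submodule ℂ V} (h : IsMHS W F G) {m : ℤ}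
    (IH : W (m - 1) ≤ Tm W F G (m - 1)) : W m ≤ Tm W F G m := by
  intro x hx
  have htop : (⨆ p : ℤ, grFil W F m p ⊓ grFil W G m (m - p)) = ⊤ :=
    (h.pure m).submodule_iSup_eq_top
  have h1 : pim W m ⟨x, hx⟩ ∈
      ⨆ p : ℤ, Submodule.map (pim W m)
        (Submodule.comap (W m).subtype (deligneI W F G p (m - p))) := by
    have hmem : pim W m ⟨x, hx⟩ ∈ (⊤ : Submodule ℂ (grW W m)) := trivial
    rw [← htop] at hmem
    exact iSup_mono (fun p => grb_le_image h IH p) hmem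
  rw [← Submodule.map_iSup] at h1
  obtain ⟨y, hy, hyx⟩ := h1
  have h2 : x - (y : V) ∈ W (m - 1) := by
    have : pim W m (⟨x, hx⟩ - y) = 0 := by rw [map_sub, hyx, sub_self]
    exact (pim_eq_zero_iff (⟨x, hx⟩ - y)).mp this
  have h3 : (y : V) ∈ ⨆ p : ℤ, deligneI W F G p (m - p) := by
    have h4 := Submodule.mem_map_of_mem (f := (W m).subtype) hy
    rw [Submodule.map_iSup] at h4
    exact iSup_mono (fun p => Submodule.map_comap_le _ _) h4
  have hx1 : x - (y : V) ∈ Tm W F G m := Tm_mono W F G (by omega) (IH h2)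
  have hx2 : (y : V) ∈ Tm W F G m := by
    have hle : (⨆ p : ℤ, deligneI W F G p (m - p)) ≤ Tm W F G m :=
      iSup_le fun p =>
        le_iSup₂_of_le (p, m - p) (show p + (m - p) ≤ m by omega) le_rfl
    exact hle h3
  simpa using add_mem hx1 hx2

lemma W_le_Tm {W F G : ℤ → Submodule ℂ V} (h : IsMHS W F G) (m : ℤ) :
    W m ≤ Tm W F G m := by
  obtain ⟨a, ha⟩ := h.w_bot
  have key : ∀ n : ℕ, ∀ m : ℤ, m ≤ a + n → W m ≤ Tm W F G m := by
    intro n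
    induction n with
    | zero =>
      intro m hm
      have hma : W m ≤ W a := h.monoW (by omega)
      rw [ha] at hma
      exact hma.trans bot_le
    | succ n ih =>
      intro m hm
      rcases le_or_gt m (a + n) with h' | h'
      · exact ih m h'
      · exact step_Tm h (ih (m - 1) (by omega))
  exact key (m - a).toNat m (by omega)

end MHSAux

namespace MHSAux

open Submodule

variable {V V' : Type} [AddCommGroup V] [Module ℂ V] [AddCommGroup V'] [Module ℂ V']

lemma map_deligneI (W F G : ℤ → Submodule ℂ V) (W' F' G' : ℤ → Submodule ℂ V')
    (f : V →ₗ[ℂ] V')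
    (hW : ∀ m : ℤ, Submodule.map f (W m) ≤ W' m)
    (hF : ∀ p : ℤ, Submodule.map f (F p) ≤ F' p)
    (hG : ∀ q : ℤ, Submodule.map f (G q) ≤ G' q) (p q : ℤ) :
    Submodule.map f (deligneI W F G p q) ≤ deligneI W' F' G' p q := by
  have hJ : Submodule.map f (Jf W G q (p + q)) ≤ Jf W' G' q (p + q) := by
    rw [Jf, Jf, Submodule.map_sup, Submodule.map_iSup]
    refine sup_le_sup ((Submodule.map_inf_le f).trans (inf_le_inf (hG q) (hW (p + q))))
      (iSup_mono fun i => (Submodule.map_inf_le f).trans (inf_le_inf (hG _) (hW _)))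
  rw [deligneI_eq, deligneI_eq]
  refine (Submodule.map_inf_le f).trans (inf_le_inf ?_ hJ)
  exact (Submodule.map_inf_le f).trans (inf_le_inf (hF p) (hW (p + q)))

end MHSAux

open MHSAux in
theorem mhs_morphism_strict'
    {V V' : Type} [AddCommGroup V] [Module ℂ V] [AddCommGroup V'] [Module ℂ V']
    (W F G : ℤ → Submodule ℂ V) (W' F' G' : ℤ → Submodule ℂ V')
    (h : IsMHS W F G) (h' : IsMHS W' F' G')
    (f : V →ₗ[ℂ] V')
    (hW : ∀ m : ℤ, Submodule.map f (W m) ≤ W' m)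
    (hF : ∀ p : ℤ, Submodule.map f (F p) ≤ F' p)
    (hG : ∀ q : ℤ, Submodule.map f (G q) ≤ G' q) :
    ∀ m : ℤ, LinearMap.range f ⊓ W' m = Submodule.map f (W m) := by
  intro m
  classical
  apply le_antisymm
  · rintro x ⟨hr, hxW⟩
    obtain ⟨v, rfl⟩ := hr
    obtain ⟨b, hb⟩ := h.w_top
    have hvT : v ∈ ⨆ pq : ℤ × ℤ, deligneI W F G pq.1 pq.2 := by
      have h1 : v ∈ W b := by rw [hb]; trivial
      have hle : Tm W F G b ≤ ⨆ pq : ℤ × ℤ, deligneI W F G pq.1 pq.2 :=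
        iSup₂_le fun pq _ => le_iSup_of_le pq le_rfl
      exact hle (W_le_Tm h b h1)
    rw [Submodule.mem_iSup_iff_exists_finsupp] at hvT
    obtain ⟨g, hg, hgsum⟩ := hvT
    set slo := g.support.filter (fun pq => pq.1 + pq.2 ≤ m) with hslo
    set shi := g.support.filter (fun pq => ¬ pq.1 + pq.2 ≤ m) with hshi
    have hsplit : ∑ pq ∈ slo, g pq + ∑ pq ∈ shi, g pq = v := by
      rw [Finset.sum_filter_add_sum_filter_not]
      exact hgsum
    have hlo : (∑ pq ∈ slo, g pq) ∈ W m := by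
      apply sum_mem
      intro pq hpq
      have hle : pq.1 + pq.2 ≤ m := (Finset.mem_filter.mp hpq).2
      exact h.monoW hle (deligneI_le_W W F G pq.1 pq.2 (hg pq))
    have hhiW : (∑ pq ∈ shi, f (g pq)) ∈ W' m := by
      have h1 : f (∑ pq ∈ slo, g pq) ∈ W' m := hW m ⟨_, hlo, rfl⟩
      have h2 : (∑ pq ∈ shi, f (g pq)) = f v - f (∑ pq ∈ slo, g pq) := by
        rw [← map_sum, ← map_sub]
        congr 1
        rw [← hsplit]; abel
      rw [h2]
      exact sub_mem hxW h1
    have hhi0 : (∑ pq ∈ shi, f (g pq)) = 0 := by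
      refine sum_gt_eq_zero h' m shi (fun pq => f (g pq)) ?_ ?_ hhiW
      · intro pq hpq
        exact map_deligneI W F G W' F' G' f hW hF hG pq.1 pq.2
          (Submodule.mem_map_of_mem (hg pq))
      · intro pq hpq
        have := (Finset.mem_filter.mp hpq).2
        omega
    have : f v = f (∑ pq ∈ slo, g pq) := by
      have h3 : f (∑ pq ∈ shi, g pq) = 0 := by rw [map_sum]; exact hhi0
      rw [← hsplit, map_add, h3, add_zero]
    rw [this]
    exact Submodule.mem_map_of_mem hlo
  · rintro x ⟨v, hv, rfl⟩
    exact ⟨⟨v, rfl⟩, hW m ⟨v, hv, rfl⟩⟩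

/-- The category of mixed Hodge structures is abelian; in particular every morphism
of mixed Hodge structures is strict with respect to the weight filtration:
`f(V) ∩ W_m V' = f(W_m V)` for all `m`. -/
theorem mhs_morphism_strict
    {V V' : Type} [AddCommGroup V] [Module ℂ V] [AddCommGroup V'] [Module ℂ V']
    (W F G : ℤ → Submodule ℂ V) (W' F' G' : ℤ → Submodule ℂ V')
    (h : IsMHS W F G) (h' : IsMHS W' F' G')
    (f : V →ₗ[ℂ] V')
    (hW : ∀ m : ℤ, Submodule.map f (W m) ≤ W' m)
    (hF : ∀ p : ℤ, Submodule.map f (F p) ≤ F' p)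
    (hG : ∀ q : ℤ, Submodule.map f (G q) ≤ G' q) :
    ∀ m : ℤ, LinearMap.range f ⊓ W' m = Submodule.map f (W m) :=
  mhs_morphism_strict' W F G W' F' G' h h' f hW hF hG
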